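/- For each string g in the reduced logogram of SAT^{nm} (a minimal partial function on {1,...,nm} taking values in {1,2} with exactly one position prescribed per clause block), the word γ(g) obtained by extending g with 0 everywhere outside Dom(g) is a satisfiable CNF encoding that includes g and includes no other string of the reduced logogram; consequently |Log_CNF(SAT^{nm})| is irreducible: no proper subset of it is complete for (CNF^{nm}, SAT^{nm}). -/
import Mathlib


/-- A *string* over alphabet `σ`: a partial function `ℕ → σ` with finite domain. -/
def Str (σ : Type*) : Type _ := {f : ℕ → Option σ // {n | f n ≠ none}.Finite}

/-- Extension order on strings: `sle f g` iff `g` extends `f`, i.e.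
`Dom f ⊆ Dom g` and `g` agrees with `f` on `Dom f`. -/
def sle {σ : Type*} (f g : Str σ) : Prop := ∀ n a, f.1 n = some a → g.1 n = some a

/-- A *word*: a string whose domain is an initial segment `{1, …, l}` of the
positive integers. -/
def IsWord {σ : Type*} (x : Str σ) : Prop :=
  ∃ l : ℕ, ∀ k : ℕ, x.1 k ≠ none ↔ 1 ≤ k ∧ k ≤ l

/-- `ExpE E H`: the expansion of `H` relative to base `E`, the set of words of `E`
that include some string from `H`. -/
def ExpE {σ : Type*} (E H : Set (Str σ)) : Set (Str σ) :=
  {x | x ∈ E ∧ ∃ a ∈ H, sle a x}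

/-- `SigmaInf E`: the set of strings included in some word of `E`. -/
def SigmaInf {σ : Type*} (E : Set (Str σ)) : Set (Str σ) :=
  {g | ∃ x ∈ E, sle g x}

/-- `LogE E F`: the logogram of `F` relative to `E`. -/
def LogE {σ : Type*} (E F : Set (Str σ)) : Set (Str σ) :=
  {g | g ∈ SigmaInf E ∧ ∀ x ∈ E, sle g x → x ∈ ExpE E F}

/-- `Entangles E K H`, written `K ⊒^E H`: every word of `E` that includes a string
from `K` also includes a string from `H`. -/
def Entangles {σ : Type*} (E K H : Set (Str σ)) : Prop :=
  ∀ x ∈ E, (∃ k ∈ K, sle k x) → ∃ h ∈ H, sle h x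

/-- `H` is *complete* for the decision problem `(E, F)`. -/
def Complete {σ : Type*} (E F H : Set (Str σ)) : Prop :=
  ∀ x ∈ E, (x ∈ F ↔ ∃ f ∈ H, sle f x)

/-- The reduced logogram `|Log_E F|`: the minimal strings of `Log_E F`. -/
def redLog {σ : Type*} (E F : Set (Str σ)) : Set (Str σ) :=
  {g | g ∈ LogE E F ∧ ∀ h ∈ LogE E F, sle h g → h = g}

/-- Position of variable `j` (1-based) in clause `i` (1-based) in the matrix
encoding with `n` variables per clause block. -/
def pos (n i j : ℕ) : ℕ := (i - 1) * n + j

/-- The set of encodings of CNF formulas with `n` variables and `m` clauses: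
total functions on `{1, …, n*m}` with values in `{0,1,2}` (coded by `Fin 3`:
`0` = variable absent, `1` = positive literal, `2` = negative literal). -/
def CNFw (n m : ℕ) : Set (Str (Fin 3)) :=
  {x | ∀ k : ℕ, x.1 k ≠ none ↔ 1 ≤ k ∧ k ≤ n * m}

/-- The assignment `v` satisfies the encoded formula `x`: every clause contains a
literal made true by `v`. -/
def Satisfies (n m : ℕ) (v : ℕ → Bool) (x : Str (Fin 3)) : Prop :=
  ∀ i : ℕ, 1 ≤ i → i ≤ m → ∃ j : ℕ, 1 ≤ j ∧ j ≤ n ∧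
    ((x.1 (pos n i j) = some 1 ∧ v j = true) ∨
     (x.1 (pos n i j) = some 2 ∧ v j = false))

/-- The set of satisfiable CNF encodings with `n` variables and `m` clauses. -/
def SATw (n m : ℕ) : Set (Str (Fin 3)) :=
  {x | x ∈ CNFw n m ∧ ∃ v : ℕ → Bool, Satisfies n m v x}

/-- `γ(g)`: the word obtained from the string `g` by extending it with the
value `0` everywhere on `{1, …, n*m}` outside `Dom g`. -/
def gamma (n m : ℕ) (g : Str (Fin 3)) : Str (Fin 3) :=
  ⟨fun k => if 1 ≤ k ∧ k ≤ n * m then some ((g.1 k).getD 0) else none,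
   (Set.finite_Icc 1 (n * m)).subset (by
     intro k hk
     simp only [Set.mem_setOf_eq] at hk
     by_contra hmem
     simp only [Set.mem_Icc] at hmem
     exact hk (if_neg hmem))⟩

/-- Two CNF words, one extending the other, are equal. -/
lemma cnf_ext_eq {n m : ℕ} {x y : Str (Fin 3)} (hx : x ∈ CNFw n m) (hy : y ∈ CNFw n m)
    (h : sle x y) : x = y := by
  apply Subtype.ext; funext k
  by_cases hk : 1 ≤ k ∧ k ≤ n * m
  · obtain ⟨a, ha⟩ := Option.ne_none_iff_exists'.mp ((hx k).mpr hk)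
    rw [ha, h k a ha]
  · have h1 : x.1 k = none := by by_contra hc; exact hk ((hx k).mp hc)
    have h2 : y.1 k = none := by by_contra hc; exact hk ((hy k).mp hc)
    rw [h1, h2]

lemma dom_bound {n m : ℕ} {g : Str (Fin 3)} (hg : g ∈ SigmaInf (CNFw n m)) :
    ∀ k a, g.1 k = some a → 1 ≤ k ∧ k ≤ n * m := by
  obtain ⟨x, hx, hgx⟩ := hg
  intro k a ha
  exact (hx k).mp (by rw [hgx k a ha]; simp)

lemma gamma_cnf (n m : ℕ) (g : Str (Fin 3)) : gamma n m g ∈ CNFw n m := by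
  intro k
  by_cases hk : 1 ≤ k ∧ k ≤ n * m <;> simp [gamma, hk]

lemma sle_gamma {n m : ℕ} {g : Str (Fin 3)} (hg : g ∈ SigmaInf (CNFw n m)) :
    sle g (gamma n m g) := by
  intro k a ha
  have hk := dom_bound hg k a ha
  simp [gamma, hk, ha]

/-- Any CNF word extending an element of the logogram is satisfiable. -/
lemma loge_sat {n m : ℕ} {g x : Str (Fin 3)} (hg : g ∈ LogE (CNFw n m) (SATw n m))
    (hx : x ∈ CNFw n m) (hgx : sle g x) : x ∈ SATw n m := by
  obtain ⟨-, a, haS, hax⟩ := hg.2 x hx hgx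
  have := cnf_ext_eq haS.1 hx hax
  rwa [← this]

lemma gamma_sat {n m : ℕ} {g : Str (Fin 3)} (hg : g ∈ LogE (CNFw n m) (SATw n m)) :
    gamma n m g ∈ SATw n m :=
  loge_sat hg (gamma_cnf n m g) (sle_gamma hg.1)

/-- Elements of the reduced logogram never take the value 0. -/
lemma redlog_no_zero {n m : ℕ} {g : Str (Fin 3)} (hg : g ∈ redLog (CNFw n m) (SATw n m)) :
    ∀ k a, g.1 k = some a → a ≠ 0 := by
  intro k₀ a ha₀ ha0
  subst ha0
  -- g' : g with position k₀ removed
  set g' : Str (Fin 3) := ⟨fun k => if k = k₀ then none else g.1 k,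
    g.2.subset (by
      intro k hk
      simp only [Set.mem_setOf_eq] at hk ⊢
      by_cases h : k = k₀
      · simp [h] at hk
      · simpa [h] using hk)⟩ with hg'def
  have hk₀ := dom_bound hg.1.1 k₀ 0 ha₀
  have hsle : sle g' g := by
    intro k a ha
    by_cases h : k = k₀
    · simp [hg'def, h] at ha
    · simpa [hg'def, h] using ha
  have hg' : g' ∈ LogE (CNFw n m) (SATw n m) := by
    constructor
    · exact ⟨gamma n m g, gamma_cnf n m g, fun k a ha => sle_gamma hg.1.1 k a (hsle k a ha)⟩
    · intro x hx hg'x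
      refine ⟨hx, x, ?_, fun k a ha => ha⟩
      -- x₀ : x with position k₀ set to 0
      set x₀ : Str (Fin 3) := ⟨fun k => if k = k₀ then some 0 else x.1 k,
        (x.2.union (Set.finite_singleton k₀)).subset (by
          intro k hk
          simp only [Set.mem_setOf_eq] at hk
          by_cases h : k = k₀
          · exact Or.inr h
          · exact Or.inl (by simpa [h] using hk))⟩ with hx₀def
      have hx₀cnf : x₀ ∈ CNFw n m := by
        intro k
        by_cases h : k = k₀
        · subst h; simpa [hx₀def] using hk₀
        · simpa [hx₀def, h] using hx k
      have hgx₀ : sle g x₀ := by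
        intro k a ha
        by_cases h : k = k₀
        · subst h; rw [ha₀] at ha; simp [hx₀def, ← ha]
        · simp only [hx₀def, h, if_false]
          exact hg'x k a (by simpa [hg'def, h] using ha)
      obtain ⟨-, v, hv⟩ := loge_sat hg.1 hx₀cnf hgx₀
      refine ⟨hx, v, ?_⟩
      intro i hi1 hi2
      obtain ⟨j, hj1, hj2, hj⟩ := hv i hi1 hi2
      refine ⟨j, hj1, hj2, ?_⟩
      by_cases h : pos n i j = k₀
      · exfalso
        have hj' : x₀.1 (pos n i j) = some 0 := by rw [h]; simp [hx₀def]
        rcases hj with ⟨hj, -⟩ | ⟨hj, -⟩ <;> rw [hj'] at hj <;> exact absurd hj (by decide)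
      · simpa only [hx₀def, h, if_false] using hj
  have := hg.2 g' hg' hsle
  have : g'.1 k₀ = some 0 := by rw [this]; exact ha₀
  simp [hg'def] at this

/-- for every string `g` of the reduced logogram of `SAT^{nm}`,
the word `γ(g)` is a satisfiable CNF encoding that includes `g` and no other
string of the reduced logogram; consequently `|Log_CNF SAT^{nm}|` is
irreducible: no proper subset of it is complete for `(CNF^{nm}, SAT^{nm})`. -/
theorem sat_redLog_irreducible (n m : ℕ) :
    (∀ g ∈ redLog (CNFw n m) (SATw n m),
      gamma n m g ∈ SATw n m ∧ sle g (gamma n m g) ∧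
      ∀ h ∈ redLog (CNFw n m) (SATw n m), sle h (gamma n m g) → h = g) ∧
    (∀ H ⊆ redLog (CNFw n m) (SATw n m), H ≠ redLog (CNFw n m) (SATw n m) →
      ¬ Complete (CNFw n m) (SATw n m) H) := by
  have main : ∀ g ∈ redLog (CNFw n m) (SATw n m),
      gamma n m g ∈ SATw n m ∧ sle g (gamma n m g) ∧
      ∀ h ∈ redLog (CNFw n m) (SATw n m), sle h (gamma n m g) → h = g := by
    intro g hg
    refine ⟨gamma_sat hg.1, sle_gamma hg.1.1, ?_⟩
    intro h hh hhg
    apply hg.2 h hh.1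
    intro k a ha
    have hγ := hhg k a ha
    have hne := redlog_no_zero hh k a ha
    by_cases hk : 1 ≤ k ∧ k ≤ n * m
    · have he : (gamma n m g).1 k = some ((g.1 k).getD 0) := if_pos hk
      rw [he, Option.some_inj] at hγ
      cases hb : g.1 k with
      | none => rw [hb] at hγ; simp at hγ; exact absurd hγ.symm hne
      | some b => rw [hb] at hγ; simp at hγ; exact congrArg some hγ
    · have he : (gamma n m g).1 k = none := if_neg hk
      rw [he] at hγ; exact absurd hγ (by simp)
  refine ⟨main, ?_⟩
  intro H hHsub hHne hcomp
  apply hHne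
  apply hHsub.antisymm
  intro g hg
  obtain ⟨sat, -, uniq⟩ := main g hg
  obtain ⟨f, hfH, hfg⟩ := (hcomp (gamma n m g) sat.1).mp sat
  rwa [← uniq f (hHsub hfH) hfg]
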